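/- Let p ∈ A be a projection and let x, y ∈ S_p(X) generate the same submodule, i.e. {x·a : a ∈ A} = {y·a : a ∈ A}. Then u := ⟨x,y⟩ satisfies u*u = uu* = p (so u is a unitary of the corner algebra pAp) and x·u = y. -/
import Mathlib


/-- A right Hilbert C*-module structure on `X` over the C*-algebra `A`:
`X` is a right `A`-module with an `A`-valued inner product satisfying
`⟨x,y⟩* = ⟨y,x⟩`, `⟨x, y·a⟩ = ⟨x,y⟩·a`, `⟨x,x⟩ ≥ 0`, and the norm of `X`
satisfies `‖x‖² = ‖⟨x,x⟩‖` (so completeness of `X` is completeness for this norm). -/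
structure CStarModuleStr (A X : Type*) [NormedRing A] [StarRing A] [CStarRing A]
    [PartialOrder A] [StarOrderedRing A] [NormedAddCommGroup X] where
  smul : X → A → X
  inner : X → X → A
  add_smul : ∀ x y a, smul (x + y) a = smul x a + smul y a
  smul_add : ∀ x a b, smul x (a + b) = smul x a + smul x b
  smul_mul : ∀ x a b, smul (smul x a) b = smul x (a * b)
  inner_add_left : ∀ x y z, inner (x + y) z = inner x z + inner y z
  inner_add_right : ∀ x y z, inner x (y + z) = inner x y + inner x z
  star_inner : ∀ x y, star (inner x y) = inner y x
  inner_smul_right : ∀ x y a, inner x (smul y a) = inner x y * a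
  inner_self_nonneg : ∀ x, 0 ≤ inner x x
  norm_sq_eq : ∀ x, ‖x‖ ^ 2 = ‖inner x x‖

variable {A X : Type*} [NormedRing A] [StarRing A] [CStarRing A]
  [PartialOrder A] [StarOrderedRing A] [CompleteSpace A]
  [NormedAddCommGroup X] [CompleteSpace X]

set_option linter.unusedSectionVars false in
lemma my_inner_sub_left (M : CStarModuleStr A X) (a b c : X) :
    M.inner (a - b) c = M.inner a c - M.inner b c := by
  have h := M.inner_add_left b (a - b) c
  rw [add_sub_cancel] at h
  rw [h]; exact (add_sub_cancel_left _ _).symm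

set_option linter.unusedSectionVars false in
lemma my_inner_sub_right (M : CStarModuleStr A X) (a b c : X) :
    M.inner a (b - c) = M.inner a b - M.inner a c := by
  have h := M.inner_add_right a c (b - c)
  rw [add_sub_cancel] at h
  rw [h]; exact (add_sub_cancel_left _ _).symm

set_option linter.unusedSectionVars false in
lemma my_inner_smul_left (M : CStarModuleStr A X) (x y : X) (a : A) :
    M.inner (M.smul x a) y = star a * M.inner x y := by
  rw [← M.star_inner, M.inner_smul_right, star_mul, M.star_inner]

lemma my_smul_proj (M : CStarModuleStr A X) (p : A) (hp : p * p = p) (hps : star p = p)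
    (z : X) (hz : M.inner z z = p) : M.smul z p = z := by
  have hw : M.inner (M.smul z p - z) (M.smul z p - z) = 0 := by
    simp only [my_inner_sub_left, my_inner_sub_right, my_inner_smul_left,
      M.inner_smul_right, hz, hps]
    simp [hp]
  have h2 := M.norm_sq_eq (M.smul z p - z)
  rw [hw, norm_zero] at h2
  have : ‖M.smul z p - z‖ = 0 := by
    have := pow_eq_zero_iff (n := 2) (by norm_num) |>.mp h2
    exact this
  exact sub_eq_zero.mp (norm_eq_zero.mp this)

lemma my_half (M : CStarModuleStr A X) (p : A)
    (hp : p * p = p) (hps : star p = p) (x y : X)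
    (hx : M.inner x x = p) (hy : M.inner y y = p)
    (hgen : {z : X | ∃ a : A, z = M.smul x a} = {z : X | ∃ a : A, z = M.smul y a}) :
    star (M.inner x y) * M.inner x y = p ∧ M.smul x (M.inner x y) = y := by
  have hyp : M.smul y p = y := my_smul_proj M p hp hps y hy
  have hxp : M.smul x p = x := my_smul_proj M p hp hps x hx
  have hymem : y ∈ {z : X | ∃ a : A, z = M.smul y a} := ⟨p, hyp.symm⟩
  rw [← hgen] at hymem
  obtain ⟨a, ha⟩ := hymem
  have hu : M.inner x y = p * a := by rw [ha, M.inner_smul_right, hx]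
  have hxu : M.smul x (M.inner x y) = y := by
    rw [hu, ← M.smul_mul, hxp, ← ha]
  have hpu : p * M.inner x y = M.inner x y := by
    rw [hu, ← mul_assoc, hp]
  constructor
  · have : M.inner (M.smul x (M.inner x y)) (M.smul x (M.inner x y)) = p := by
      rw [hxu, hy]
    rw [my_inner_smul_left, M.inner_smul_right, hx, hpu] at this
    exact this
  · exact hxu

/-- If `x, y ∈ S_p(X)` generate the same submodule, then `u := ⟨x,y⟩` satisfies
`u*u = uu* = p` (a unitary of the corner algebra `pAp`) and `x·u = y`. -/
theorem same_submodule_inner_unitary (M : CStarModuleStr A X) (p : A)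
    (hp : p * p = p) (hps : star p = p) (x y : X)
    (hx : M.inner x x = p) (hy : M.inner y y = p)
    (hgen : {z : X | ∃ a : A, z = M.smul x a} = {z : X | ∃ a : A, z = M.smul y a}) :
    star (M.inner x y) * M.inner x y = p ∧
      M.inner x y * star (M.inner x y) = p ∧
      M.smul x (M.inner x y) = y := by
  obtain ⟨h1, h3⟩ := my_half M p hp hps x y hx hy hgen
  obtain ⟨h2, _⟩ := my_half M p hp hps y x hy hx hgen.symm
  refine ⟨h1, ?_, h3⟩
  rw [← M.star_inner, star_star] at h2
  exact h2
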